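/- For a nontrivial additive character ψ of 𝔽_q and positive integers b_1,…,b_n, there exists a ∈ 𝔽_q^× such that Kl_a^n(ψ; b_1,…,b_n) ≠ 0. -/
import Mathlib


/-- The generalized Kloosterman sum Kl_a^n(ψ; b₁, …, b_n)
= ∑_{x₁^{b₁} ⋯ x_n^{b_n} = a} ψ(x₁ + ⋯ + x_n). -/
noncomputable def Kl {F : Type*} [Field F] [Fintype F] [DecidableEq F]
    (ψ : AddChar F ℂ) (n : ℕ) (b : Fin n → ℕ) (a : F) : ℂ :=
  ∑ x ∈ Finset.univ.filter (fun x : Fin n → F => ∏ i, x i ^ b i = a), ψ (∑ i, x i)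

lemma addchar_map_sum {F : Type*} [Field F] (ψ : AddChar F ℂ) {ι : Type*} (s : Finset ι)
    (f : ι → F) : ψ (∑ i ∈ s, f i) = ∏ i ∈ s, ψ (f i) := by
  classical
  induction s using Finset.cons_induction with
  | empty => simp
  | cons a s ha ih => rw [Finset.sum_cons, Finset.prod_cons, AddChar.map_add_eq_mul, ih]

/-- For a nontrivial additive character ψ and positive integers b₁, …, b_n,
there exists a ∈ 𝔽_q^× with Kl_a^n(ψ; b₁, …, b_n) ≠ 0. -/
theorem stmt6 {F : Type*} [Field F] [Fintype F] [DecidableEq F]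
    (ψ : AddChar F ℂ) (hψ : ψ ≠ 1) (n : ℕ) (hn : 0 < n)
    (b : Fin n → ℕ) (hb : ∀ i, 0 < b i) :
    ∃ a : Fˣ, Kl ψ n b (a : F) ≠ 0 := by
  by_contra h
  push_neg at h
  have key : ∑ a : Fˣ, Kl ψ n b (a : F) = (-1 : ℂ) ^ n := by
    have h1 : ∑ a : Fˣ, Kl ψ n b (a : F)
        = ∑ a ∈ Finset.univ.filter (fun a : F => a ≠ 0), Kl ψ n b a := by
      rw [Finset.sum_subtype (p := fun a : F => a ≠ 0) (Finset.univ.filter (fun a : F => a ≠ 0))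
        (fun x => by simp) (Kl ψ n b)]
      exact Fintype.sum_equiv unitsEquivNeZero _ _ (fun a => by simp)
    have h2 : ∑ a ∈ Finset.univ.filter (fun a : F => a ≠ 0), Kl ψ n b a
        = ∑ x ∈ Finset.univ.filter
            (fun x : Fin n → F => (∏ i, x i ^ b i) ∈ Finset.univ.filter (fun a : F => a ≠ 0)),
            ψ (∑ i, x i) :=
      Finset.sum_fiberwise_eq_sum_filter _ _ _ _
    have h3 : Finset.univ.filter
            (fun x : Fin n → F => (∏ i, x i ^ b i) ∈ Finset.univ.filter (fun a : F => a ≠ 0))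
        = Fintype.piFinset (fun _ : Fin n => Finset.univ.filter (fun a : F => a ≠ 0)) := by
      ext x
      simp only [Finset.mem_filter, Finset.mem_univ, true_and, Fintype.mem_piFinset]
      rw [Finset.prod_ne_zero_iff]
      constructor
      · intro hx i
        intro h0
        exact hx i (Finset.mem_univ i) (by rw [h0, zero_pow (hb i).ne'])
      · intro hx i _
        exact pow_ne_zero _ (hx i)
    have h4 : ∑ x ∈ Fintype.piFinset (fun _ : Fin n => Finset.univ.filter (fun a : F => a ≠ 0)),
        ψ (∑ i, x i) = ∏ _i : Fin n, ∑ y ∈ Finset.univ.filter (fun a : F => a ≠ 0), ψ y := by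
      rw [Finset.prod_univ_sum]
      exact Finset.sum_congr rfl (fun x _ => addchar_map_sum ψ _ _)
    have h5 : ∑ y ∈ Finset.univ.filter (fun a : F => a ≠ 0), ψ y = -1 := by
      have h6 : ∑ y : F, ψ y = 0 := AddChar.sum_eq_zero_iff_ne_zero.2
        (by rwa [AddChar.one_eq_zero] at hψ)
      rw [show Finset.univ.filter (fun a : F => a ≠ 0) = Finset.univ.erase 0 from
        Finset.filter_ne' _ _, Finset.sum_erase_eq_sub (Finset.mem_univ 0), h6,
        AddChar.map_zero_eq_one]
      ring
    rw [h1, h2, h3, h4, h5, Finset.prod_const, Finset.card_univ, Fintype.card_fin]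
  simp only [h, Finset.sum_const, smul_zero] at key
  exact pow_ne_zero n (by norm_num : (-1:ℂ) ≠ 0) key.symm
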